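/- Under the stated hypotheses, the self-energy matrix Σ := A − G⁻¹ is sparse: Σ_{ij} = 0 whenever i > p or j > p. Equivalently, A − G⁻¹ = [[Σ_p, 0],[0, 0]] for some symmetric p×p matrix Σ_p. -/

import Mathlib

open MeasureTheory Matrix Real

section AuxiliaryLemmas
open Filter Topology
open scoped ENNReal

lemma lin_gauss_tendsto (c p0 p1 : ℝ) (hc : 0 < c) (l : Filter ℝ)
    (hl : Tendsto (fun s : ℝ => s ^ 2) l atTop) :
    Tendsto (fun s : ℝ => (p0 + p1 * s) * Real.exp (-(c/2) * s^2)) l (𝓝 0) := by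
  have hphi : Tendsto (fun u : ℝ => (|p0| + |p1| + (2/c) * |p1| * u) * Real.exp (-u))
      atTop (𝓝 0) := by
    have ha : Tendsto (fun u : ℝ => (|p0| + |p1|) * Real.exp (-u)) atTop (𝓝 (0:ℝ)) := by
      simpa using (Real.tendsto_exp_neg_atTop_nhds_zero).const_mul (|p0| + |p1|)
    have hb : Tendsto (fun u : ℝ => ((2/c) * |p1|) * (u * Real.exp (-u))) atTop (𝓝 (0:ℝ)) := by
      have := Real.tendsto_pow_mul_exp_neg_atTop_nhds_zero 1
      simp only [pow_one] at this
      simpa using this.const_mul ((2/c) * |p1|)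
    have := ha.add hb
    simp only [add_zero] at this
    convert this using 2 with u
    ring
  have hcomp : Tendsto (fun s : ℝ => (c/2) * s ^ 2) l atTop :=
    hl.const_mul_atTop (by positivity)
  have hg : Tendsto (fun s : ℝ => (|p0| + |p1| + |p1| * s^2) * Real.exp (-(c/2) * s^2)) l (𝓝 0) := by
    have := hphi.comp hcomp
    convert this using 2 with s
    · simp only [Function.comp]
      congr 1
      · field_simp
      · congr 1
        ring
  apply squeeze_zero_norm _ hg
  intro s
  have h1 : |p0 + p1 * s| ≤ |p0| + |p1| + |p1| * s^2 := by
    have : |p0 + p1 * s| ≤ |p0| + |p1| * |s| := by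
      calc |p0 + p1*s| ≤ |p0| + |p1*s| := abs_add_le _ _
      _ = |p0| + |p1| * |s| := by rw [abs_mul]
    have h2 : |s| ≤ 1 + s^2 := by nlinarith [abs_nonneg s, sq_abs s]
    nlinarith [abs_nonneg p1, abs_nonneg p0]
  rw [norm_mul, norm_eq_abs, norm_eq_abs, abs_exp]
  have : (0:ℝ) < Real.exp (-(c/2) * s^2) := Real.exp_pos _
  nlinarith [Real.exp_pos (-(c/2) * s^2)]

lemma quad_gauss_integrable (c : ℝ) (hc : 0 < c) (b e a0 a1 a2 : ℝ) :
    Integrable (fun t : ℝ => (a0 + a1 * t + a2 * t^2) * Real.exp (-(c/2) * t^2 - b * t - e)) := by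
  have base : ∀ p0 p1 p2 : ℝ,
      Integrable (fun s : ℝ => (p0 + p1 * s + p2 * s^2) * Real.exp (-(c/2) * s^2)) := by
    intro p0 p1 p2
    have h0 : Integrable (fun s : ℝ => Real.exp (-(c/2) * s^2)) :=
      integrable_exp_neg_mul_sq (by positivity)
    have h1 : Integrable (fun s : ℝ => s * Real.exp (-(c/2) * s^2)) :=
      integrable_mul_exp_neg_mul_sq (by positivity)
    have h2 : Integrable (fun s : ℝ => s^2 * Real.exp (-(c/2) * s^2)) := by
      have h := integrable_rpow_mul_exp_neg_mul_sq (b := c/2) (by positivity) (s := 2) (by norm_num)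
      have habs : (fun s : ℝ => s^2 * Real.exp (-(c/2) * s^2))
          = fun s : ℝ => s ^ (2:ℝ) * Real.exp (-(c/2) * s^2) := by
        funext s
        rw [show ((2:ℝ)) = ((2:ℕ):ℝ) from by norm_num, Real.rpow_natCast]
      rw [habs]
      exact h
    apply (((h0.const_mul p0).add (h1.const_mul p1)).add (h2.const_mul p2)).congr
    filter_upwards with s
    simp only [Pi.add_apply]
    ring
  set K := Real.exp (b^2/(2*c) - e) with hK
  have hb := ((base (a0 - a1*(b/c) + a2*(b/c)^2) (a1 - 2*a2*(b/c)) a2).const_mul K).comp_add_right (b/c)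
  convert hb using 2 with t
  · rfl
  have hexp : (a0 + a1 * t + a2 * t^2) * Real.exp (-(c/2) * t^2 - b * t - e)
      = K * ((a0 - a1*(b/c) + a2*(b/c)^2 + (a1 - 2*a2*(b/c)) * (t + b/c) + a2 * (t + b/c)^2)
        * Real.exp (-(c/2) * (t + b/c)^2)) := by
    have hq : a0 - a1*(b/c) + a2*(b/c)^2 + (a1 - 2*a2*(b/c)) * (t + b/c) + a2 * (t + b/c)^2
        = a0 + a1 * t + a2 * t^2 := by field_simp; ring
    have he : K * Real.exp (-(c/2) * (t + b/c)^2) = Real.exp (-(c/2) * t^2 - b * t - e) := by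
      rw [hK, ← Real.exp_add]; congr 1; field_simp; ring
    rw [hq, ← he]; ring
  exact hexp

lemma lin_gauss_tendsto_gen (c b e p0 p1 : ℝ) (hc : 0 < c) (l : Filter ℝ)
    (hl : Tendsto (fun s : ℝ => s ^ 2) l atTop)
    (hshift : Tendsto (fun t : ℝ => t + b / c) l l) :
    Tendsto (fun t : ℝ => (p0 + p1 * t) * Real.exp (-(c/2) * t^2 - b * t - e)) l (𝓝 0) := by
  set K := Real.exp (b^2/(2*c) - e) with hK
  have h := ((lin_gauss_tendsto c (p0 - p1*(b/c)) p1 hc l hl).comp hshift).const_mul K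
  rw [mul_zero] at h
  apply h.congr
  intro t
  simp only [Function.comp]
  have hq : p0 - p1*(b/c) + p1 * (t + b/c) = p0 + p1 * t := by field_simp; ring
  have he : K * Real.exp (-(c/2) * (t + b/c)^2) = Real.exp (-(c/2) * t^2 - b * t - e) := by
    rw [hK, ← Real.exp_add]; congr 1; field_simp; ring
  rw [hq, ← he]; ring

set_option maxHeartbeats 1000000 in
lemma gauss_ibp (c : ℝ) (hc : 0 < c) (b e al be : ℝ) :
    ∫ t : ℝ, ((al + be * t) * (c * t + b) - be) * Real.exp (-(c/2) * t^2 - b * t - e) = 0 := by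
  have hsq_top : Tendsto (fun s : ℝ => s ^ 2) atTop atTop := tendsto_pow_atTop (by norm_num)
  have hsq_bot : Tendsto (fun s : ℝ => s ^ 2) atBot atTop := by
    have h1 : Tendsto (fun s : ℝ => |s| ^ 2) atBot atTop :=
      (tendsto_pow_atTop (n := 2) (by norm_num)).comp tendsto_abs_atBot_atTop
    simpa only [sq_abs] using h1
  have hderiv : ∀ t : ℝ, HasDerivAt (fun t => (al + be * t) * Real.exp (-(c/2) * t^2 - b * t - e))
      ((be - (al + be * t) * (c * t + b)) * Real.exp (-(c/2) * t^2 - b * t - e)) t := by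
    intro t
    have h1 : HasDerivAt (fun t : ℝ => al + be * t) be t := by
      simpa using ((hasDerivAt_id t).const_mul be).const_add al
    have h2 : HasDerivAt (fun t : ℝ => -(c/2) * t^2 - b * t - e) (-(c/2) * (2*t) - b) t := by
      have ha : HasDerivAt (fun t : ℝ => t^2) (2*t) t := by
        simpa using hasDerivAt_pow 2 t
      have hb2 := ((ha.const_mul (-(c/2))).sub ((hasDerivAt_id t).const_mul b)).sub_const e
      simpa using hb2
    have h3 := h1.mul h2.exp
    refine h3.congr_deriv ?_
    ring
  have hint : Integrable (fun t : ℝ =>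
      (be - (al + be * t) * (c * t + b)) * Real.exp (-(c/2) * t^2 - b * t - e)) := by
    have h := quad_gauss_integrable c hc b e (be - al*b) (-(al*c) - be*b) (-(be*c))
    apply h.congr
    filter_upwards with t
    ring
  have hbot := lin_gauss_tendsto_gen c b e al be hc atBot hsq_bot
    (tendsto_atBot_add_const_right _ _ tendsto_id)
  have htop := lin_gauss_tendsto_gen c b e al be hc atTop hsq_top
    (tendsto_atTop_add_const_right _ _ tendsto_id)
  have key := integral_of_hasDerivAt_of_tendsto hderiv hint hbot htop
  rw [sub_zero] at key
  have hneg : ∫ t : ℝ, ((al + be * t) * (c * t + b) - be) * Real.exp (-(c/2) * t^2 - b * t - e)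
      = - ∫ t : ℝ, (be - (al + be * t) * (c * t + b)) * Real.exp (-(c/2) * t^2 - b * t - e) := by
    rw [← integral_neg]; congr 1; funext t; ring
  rw [hneg, key, neg_zero]

lemma integral_eq_zero_of_line {n : ℕ} (j : Fin (n+1)) (f : (Fin (n+1) → ℝ) → ℝ)
    (hf : Integrable f)
    (hline : ∀ x : Fin (n+1) → ℝ, ∫ t : ℝ, f (Function.update x j t) = 0) :
    ∫ x, f x = 0 := by
  have mp := volume_preserving_piFinSuccAbove (fun _ : Fin (n+1) => ℝ) j
  set e := MeasurableEquiv.piFinSuccAbove (fun _ : Fin (n+1) => ℝ) j with he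
  have h1 : ∫ z : ℝ × (Fin n → ℝ), f (e.symm z) = ∫ x, f x :=
    (mp.symm e).integral_comp' f
  have hint : Integrable (fun z : ℝ × (Fin n → ℝ) => f (e.symm z)) :=
    ((mp.symm e).integrable_comp_emb (e.symm).measurableEmbedding).mpr hf
  rw [← h1]
  have hvol : (volume : Measure (ℝ × (Fin n → ℝ))) = (volume : Measure ℝ).prod volume := rfl
  rw [hvol] at hint ⊢
  rw [integral_prod_symm _ hint]
  have hinner : ∀ y : Fin n → ℝ, (∫ t : ℝ, f (e.symm (t, y))) = 0 := by
    intro y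
    have hsymm : ∀ t : ℝ, e.symm (t, y) = Function.update (Fin.insertNth j 0 y) j t := by
      intro t
      have h2 : e.symm (t, y) = Fin.insertNth j t y := rfl
      rw [h2, Fin.update_insertNth]
    simp_rw [hsymm]
    exact hline _
  simp_rw [hinner]
  simp

lemma key_ibp {n : ℕ} (p : ℕ) (A : Matrix (Fin (n+1)) (Fin (n+1)) ℝ) (hA : A.IsSymm)
    (U : (Fin (n+1) → ℝ) → ℝ)
    (hU : ∀ x y : Fin (n+1) → ℝ, (∀ i : Fin (n+1), (i : ℕ) < p → x i = y i) → U x = U y)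
    (hZint : Integrable (fun x : Fin (n+1) → ℝ =>
      Real.exp (-(1/2) * (x ⬝ᵥ A.mulVec x) - U x)))
    (hmom : ∀ i j : Fin (n+1), Integrable (fun x : Fin (n+1) → ℝ =>
      x i * x j * Real.exp (-(1/2) * (x ⬝ᵥ A.mulVec x) - U x)))
    (i j : Fin (n+1)) (hj : p ≤ (j : ℕ)) (hAjj : 0 < A j j) :
    ∫ x : Fin (n+1) → ℝ, (x i * (A.mulVec x) j - (if i = j then 1 else 0))
      * Real.exp (-(1/2) * (x ⬝ᵥ A.mulVec x) - U x) = 0 := by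
  classical
  set ρ : (Fin (n+1) → ℝ) → ℝ :=
    fun x => Real.exp (-(1/2) * (x ⬝ᵥ A.mulVec x) - U x) with hρ
  have hsymm : ∀ vv ww : Fin (n+1) → ℝ, vv ⬝ᵥ A.mulVec ww = ww ⬝ᵥ A.mulVec vv := by
    intro vv ww
    rw [Matrix.dotProduct_mulVec, ← Matrix.mulVec_transpose, hA.eq, dotProduct_comm]
  apply integral_eq_zero_of_line j
  · -- integrability
    have hsum : Integrable (fun x : Fin (n+1) → ℝ =>
        ∑ k, A j k * (x i * x k * ρ x)) :=
      integrable_finset_sum _ (fun k _ => (hmom i k).const_mul _)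
    apply (hsum.sub (hZint.const_mul (if i = j then 1 else 0))).congr
    filter_upwards with x
    have hmv : (A.mulVec x) j = ∑ k, A j k * x k := rfl
    have hsum_eq : ∑ k, A j k * (x i * x k * ρ x) = x i * (∑ k, A j k * x k) * ρ x := by
      rw [Finset.mul_sum, Finset.sum_mul]
      exact Finset.sum_congr rfl fun k _ => by ring
    simp only [Pi.sub_apply]
    rw [hsum_eq, hmv]
    simp only [hρ]
    ring
  · -- line integrals vanish
    intro x
    set u : Fin (n+1) → ℝ := Function.update x j 0 with hu
    set ej : Fin (n+1) → ℝ := Pi.single j 1 with hej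
    have hyu : ∀ t : ℝ, Function.update x j t = u + t • ej := by
      intro t
      funext k
      by_cases hk : k = j
      · subst hk; simp [hu, hej]
      · simp [hu, hej, Function.update_apply, hk, Pi.single_apply]
    set c := A j j with hc
    set s := (A.mulVec u) j with hs
    set e0 := (1/2) * (u ⬝ᵥ A.mulVec u) + U x with he0
    have hAej : (A.mulVec ej) j = c := by simp [hej, hc]
    have hUconst : ∀ t : ℝ, U (u + t • ej) = U x := by
      intro t
      apply hU
      intro k hk
      have hkj : k ≠ j := by
        intro h
        rw [h] at hk
        omega
      simp [hu, hej, Function.update_apply, hkj, Pi.single_apply]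
    have hexp : ∀ t : ℝ, ρ (u + t • ej) = Real.exp (-(c/2) * t^2 - s * t - e0) := by
      intro t
      have hq : (u + t • ej) ⬝ᵥ A.mulVec (u + t • ej)
          = u ⬝ᵥ A.mulVec u + 2 * s * t + c * t^2 := by
        have h1 : ej ⬝ᵥ A.mulVec u = s := by
          rw [hej, single_dotProduct, one_mul, hs]
        have h2 : u ⬝ᵥ A.mulVec ej = s := by rw [hsymm]; exact h1
        have h3 : ej ⬝ᵥ A.mulVec ej = c := by
          rw [hej, single_dotProduct, one_mul, ← hej, hAej]
        simp only [Matrix.mulVec_add, Matrix.mulVec_smul, dotProduct_add,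
          add_dotProduct, dotProduct_smul, smul_dotProduct,
          smul_eq_mul, h1, h2, h3]
        ring
      rw [hρ]
      simp only
      rw [hq, hUconst t]
      congr 1
      ring
    have hmvj : ∀ t : ℝ, (A.mulVec (u + t • ej)) j = c * t + s := by
      intro t
      rw [Matrix.mulVec_add, Matrix.mulVec_smul]
      simp only [Pi.add_apply, Pi.smul_apply, smul_eq_mul]
      rw [hAej, ← hs]
      ring
    have hcomp : ∀ t : ℝ, (u + t • ej) i = (if i = j then 0 else x i) + (if i = j then 1 else 0) * t := by
      intro t
      rw [← hyu t]
      by_cases hij : i = j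
      · subst hij; simp
      · simp [Function.update_apply, hij]
    have hpt : ∀ t : ℝ,
        (Function.update x j t i * (A.mulVec (Function.update x j t)) j
          - (if i = j then 1 else 0)) * ρ (Function.update x j t)
        = (((if i = j then 0 else x i) + (if i = j then 1 else 0) * t) * (c * t + s)
          - (if i = j then 1 else 0)) * Real.exp (-(c/2) * t^2 - s * t - e0) := by
      intro t
      rw [hyu t, hexp t, hmvj t, hcomp t]
    simp only [hρ] at hpt ⊢
    simp_rw [hpt]
    exact gauss_ibp c hAjj s e0 _ _

lemma hyperplane_null {m : ℕ} (v : Fin m → ℝ) (hv : v ≠ 0) :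
    volume {x : Fin m → ℝ | ∑ i, v i * x i = 0} = 0 := by
  classical
  obtain ⟨i0, hi0⟩ : ∃ i0, v i0 ≠ 0 := by
    by_contra h
    push_neg at h
    exact hv (funext h)
  let φ : (Fin m → ℝ) →ₗ[ℝ] ℝ :=
    { toFun := fun x => ∑ i, v i * x i,
      map_add' := fun a b => by simp [mul_add, Finset.sum_add_distrib],
      map_smul' := fun c a => by simp [Finset.mul_sum, mul_comm, mul_left_comm] }
  have hcoe : ∀ x, φ x = ∑ i, v i * x i := fun x => rfl
  have hset : {x : Fin m → ℝ | ∑ i, v i * x i = 0}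
      = ((LinearMap.ker φ : Submodule ℝ (Fin m → ℝ)) : Set (Fin m → ℝ)) := by
    ext x
    simp [LinearMap.mem_ker, hcoe]
  rw [hset]
  apply Measure.addHaar_submodule
  intro h
  have hmem := Submodule.eq_top_iff'.mp h (Pi.single i0 1)
  rw [LinearMap.mem_ker, hcoe] at hmem
  rw [Finset.sum_eq_single i0 (fun k _ hk => by simp [Pi.single_apply, hk]) (by simp)] at hmem
  simp at hmem
  exact hi0 hmem

end AuxiliaryLemmas

open Filter Topology in
open scoped ENNReal in
/-- **Sparsity of the classical self-energy (Proposition 1.1).**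
For a Gibbs measure with Hamiltonian `½ xᵀAx + U(x)` where `U` depends only on the
first `p` coordinates and the lower-right block of `A` is positive definite, the
self-energy `Σ = A − G⁻¹` vanishes outside the upper-left `p × p` block. -/
theorem classical_self_energy_sparsity
    (d p : ℕ) (hd : 0 < d) (hp : p ≤ d)
    (A : Matrix (Fin d) (Fin d) ℝ) (hA : A.IsSymm)
    (hA22 : ∀ v : Fin d → ℝ, (∀ i : Fin d, (i : ℕ) < p → v i = 0) → v ≠ 0 →
      0 < v ⬝ᵥ A.mulVec v)
    (U : (Fin d → ℝ) → ℝ) (hUmeas : Measurable U)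
    (hU : ∀ x y : Fin d → ℝ, (∀ i : Fin d, (i : ℕ) < p → x i = y i) → U x = U y)
    (hZint : Integrable (fun x : Fin d → ℝ =>
      Real.exp (-(1/2) * (x ⬝ᵥ A.mulVec x) - U x)))
    (hmom : ∀ i j : Fin d, Integrable (fun x : Fin d → ℝ =>
      x i * x j * Real.exp (-(1/2) * (x ⬝ᵥ A.mulVec x) - U x)))
    (Z : ℝ)
    (hZdef : Z = ∫ x : Fin d → ℝ, Real.exp (-(1/2) * (x ⬝ᵥ A.mulVec x) - U x))
    (G : Matrix (Fin d) (Fin d) ℝ)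
    (hGdef : ∀ i j : Fin d, G i j = (1 / Z) * ∫ x : Fin d → ℝ,
      x i * x j * Real.exp (-(1/2) * (x ⬝ᵥ A.mulVec x) - U x)) :
    ∀ i j : Fin d, (p ≤ (i : ℕ) ∨ p ≤ (j : ℕ)) → (A - G⁻¹) i j = 0 := by
  classical
  obtain ⟨n, rfl⟩ : ∃ n, d = n + 1 := ⟨d - 1, (Nat.succ_pred_eq_of_pos hd).symm⟩
  set ρ : (Fin (n+1) → ℝ) → ℝ :=
    fun x => Real.exp (-(1/2) * (x ⬝ᵥ A.mulVec x) - U x) with hρ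
  -- Z is positive
  have hZpos : 0 < Z := by
    rw [hZdef, integral_pos_iff_support_of_nonneg (fun x => (Real.exp_pos _).le) hZint]
    have hsupp : Function.support ρ = Set.univ :=
      Set.eq_univ_iff_forall.mpr fun x => (Real.exp_pos _).ne'
    rw [hsupp]
    exact IsOpen.measure_pos volume isOpen_univ ⟨0, trivial⟩
  have hZne : Z ≠ 0 := hZpos.ne'
  have hIG : ∀ i k : Fin (n+1), (∫ x : Fin (n+1) → ℝ, x i * x k * ρ x) = Z * G i k := by
    intro i k
    rw [hGdef i k, ← mul_assoc, mul_one_div_cancel hZne, one_mul]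
  have hGs : ∀ i k : Fin (n+1), G k i = G i k := by
    intro i k
    rw [hGdef, hGdef]
    congr 1
    have : (fun x : Fin (n+1) → ℝ => x k * x i * ρ x) = fun x => x i * x k * ρ x :=
      funext fun x => by ring
    rw [this]
  have hGsymm : Gᵀ = G := Matrix.ext fun i k => by
    rw [Matrix.transpose_apply]; exact hGs i k
  -- positive diagonal entries of A in the lower block
  have hAdiag : ∀ j : Fin (n+1), p ≤ (j : ℕ) → 0 < A j j := by
    intro j hj
    have h1 : Pi.single j (1:ℝ) ⬝ᵥ A.mulVec (Pi.single j 1) = A j j := by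
      rw [Matrix.mulVec_single, single_dotProduct]
      simp
    have h2 := hA22 (Pi.single j 1) ?_ ?_
    · rwa [h1] at h2
    · intro i hi
      have hij : i ≠ j := by intro h; rw [h] at hi; omega
      simp [Pi.single_apply, hij]
    · intro h
      have := congrFun h j
      simp at this
  -- the main integral identity : G * A = 1 on columns j ≥ p
  have hGA : ∀ i j : Fin (n+1), p ≤ (j : ℕ) →
      (G * A) i j = (1 : Matrix (Fin (n+1)) (Fin (n+1)) ℝ) i j := by
    intro i j hj
    have key := key_ibp p A hA U hU hZint hmom i j hj (hAdiag j hj)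
    have hexp1 : (fun x : Fin (n+1) → ℝ => x i * (A.mulVec x) j * ρ x)
        = fun x => ∑ k, A j k * (x i * x k * ρ x) := by
      funext x
      have hmv : (A.mulVec x) j = ∑ k, A j k * x k := rfl
      rw [hmv, Finset.mul_sum, Finset.sum_mul]
      refine (Finset.sum_congr rfl fun k _ => by ring).symm
    have hint1 : Integrable (fun x : Fin (n+1) → ℝ => x i * (A.mulVec x) j * ρ x) := by
      rw [hexp1]
      exact integrable_finset_sum _ (fun k _ => (hmom i k).const_mul _)
    have hint2 : Integrable (fun x : Fin (n+1) → ℝ => (if i = j then (1:ℝ) else 0) * ρ x) :=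
      hZint.const_mul _
    have keysplit : (∫ x : Fin (n+1) → ℝ, x i * (A.mulVec x) j * ρ x)
        - (∫ x : Fin (n+1) → ℝ, (if i = j then (1:ℝ) else 0) * ρ x) = 0 := by
      have heq : (fun x : Fin (n+1) → ℝ => x i * (A.mulVec x) j * ρ x
            - (if i = j then (1:ℝ) else 0) * ρ x)
          = fun x : Fin (n+1) → ℝ => (x i * (A.mulVec x) j - (if i = j then 1 else 0)) * ρ x :=
        funext fun x => by ring
      rw [← integral_sub hint1 hint2, heq]
      exact key
    have hval1 : ∫ x : Fin (n+1) → ℝ, x i * (A.mulVec x) j * ρ x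
        = ∑ k, A j k * (Z * G i k) := by
      rw [hexp1, integral_finset_sum _ (fun k _ => (hmom i k).const_mul _)]
      exact Finset.sum_congr rfl fun k _ => by rw [integral_const_mul, hIG]
    have hval2 : ∫ x : Fin (n+1) → ℝ, (if i = j then (1:ℝ) else 0) * ρ x
        = (if i = j then (1:ℝ) else 0) * Z := by
      rw [integral_const_mul, ← hZdef]
    rw [hval1, hval2, sub_eq_zero] at keysplit
    have hterm : ∑ k, G i k * A k j = (1/Z) * ∑ k, A j k * (Z * G i k) := by
      rw [Finset.mul_sum]
      refine Finset.sum_congr rfl fun k _ => ?_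
      rw [hA.apply j k]
      field_simp
    rw [Matrix.mul_apply, hterm, keysplit, Matrix.one_apply]
    by_cases hij : i = j <;> simp [hij] <;> field_simp
  -- G is positive definite
  have hGpd : G.PosDef := by
    refine Matrix.PosDef.of_dotProduct_mulVec_pos ?_ ?_
    · show Gᴴ = G
      ext i k
      rw [Matrix.conjTranspose_apply, star_trivial]
      exact hGs i k
    · intro v hv
      have hexpand : (fun x : Fin (n+1) → ℝ => (∑ i, v i * x i)^2 * ρ x)
          = fun x => ∑ i, ∑ k, (v i * v k) * (x i * x k * ρ x) := by
        funext x
        rw [sq, Finset.sum_mul_sum, Finset.sum_mul]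
        refine Finset.sum_congr rfl fun i _ => ?_
        rw [Finset.sum_mul]
        refine Finset.sum_congr rfl fun k _ => by ring
      have hintq : Integrable (fun x : Fin (n+1) → ℝ => (∑ i, v i * x i)^2 * ρ x) := by
        rw [hexpand]
        exact integrable_finset_sum _
          (fun i _ => integrable_finset_sum _ (fun k _ => (hmom i k).const_mul _))
      have hval : ∫ x : Fin (n+1) → ℝ, (∑ i, v i * x i)^2 * ρ x
          = ∑ i, ∑ k, (v i * v k) * (Z * G i k) := by
        rw [hexpand, integral_finset_sum _
          (fun i _ => integrable_finset_sum _ (fun k _ => (hmom i k).const_mul _))]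
        refine Finset.sum_congr rfl fun i _ => ?_
        rw [integral_finset_sum _ (fun k _ => (hmom i k).const_mul _)]
        exact Finset.sum_congr rfl fun k _ => by rw [integral_const_mul, hIG]
      have hLHS : star v ⬝ᵥ G.mulVec v = ∑ i, v i * ∑ k, G i k * v k := by
        simp [dotProduct, Matrix.mulVec]
      have hdot : star v ⬝ᵥ G.mulVec v
          = (1/Z) * ∫ x : Fin (n+1) → ℝ, (∑ i, v i * x i)^2 * ρ x := by
        rw [hval, hLHS, Finset.mul_sum]
        refine Finset.sum_congr rfl fun i _ => ?_
        rw [Finset.mul_sum, Finset.mul_sum]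
        refine Finset.sum_congr rfl fun k _ => ?_
        field_simp
      rw [hdot]
      have hpos : 0 < ∫ x : Fin (n+1) → ℝ, (∑ i, v i * x i)^2 * ρ x := by
        rw [integral_pos_iff_support_of_nonneg (fun x => by positivity) hintq]
        have hker : volume {x : Fin (n+1) → ℝ | ∑ i, v i * x i = 0} = 0 :=
          hyperplane_null v hv
        have hsub : {x : Fin (n+1) → ℝ | ∑ i, v i * x i = 0}ᶜ
            ⊆ Function.support (fun x => (∑ i, v i * x i)^2 * ρ x) := by
          intro x hx
          have hne : ∑ i, v i * x i ≠ 0 := hx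
          exact mul_ne_zero (pow_ne_zero 2 hne) (Real.exp_ne_zero _)
        refine lt_of_lt_of_le ?_ (measure_mono hsub)
        by_contra h
        push_neg at h
        have h0 : volume ({x : Fin (n+1) → ℝ | ∑ i, v i * x i = 0}ᶜ) = 0 :=
          le_antisymm (by simpa using h) zero_le
        have huniv : (0:ℝ≥0∞) < volume (Set.univ : Set (Fin (n+1) → ℝ)) :=
          IsOpen.measure_pos volume isOpen_univ ⟨0, trivial⟩
        have hle : volume (Set.univ : Set (Fin (n+1) → ℝ))
            ≤ volume {x : Fin (n+1) → ℝ | ∑ i, v i * x i = 0}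
              + volume ({x : Fin (n+1) → ℝ | ∑ i, v i * x i = 0}ᶜ) := by
          rw [← Set.union_compl_self {x : Fin (n+1) → ℝ | ∑ i, v i * x i = 0}]
          exact measure_union_le _ _
        rw [hker, h0, add_zero] at hle
        exact absurd (le_antisymm hle zero_le) huniv.ne'
      exact mul_pos (one_div_pos.mpr hZpos) hpos
  have hdet : IsUnit G.det := hGpd.det_pos.ne'.isUnit
  -- finish
  have hfinal : ∀ i j : Fin (n+1), p ≤ (j : ℕ) → (A - G⁻¹) i j = 0 := by
    intro i j hj
    have h1 : G⁻¹ * (G * A) = A := by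
      rw [← Matrix.mul_assoc, Matrix.nonsing_inv_mul G hdet, Matrix.one_mul]
    have hAij : A i j = G⁻¹ i j := by
      calc A i j = (G⁻¹ * (G * A)) i j := by rw [h1]
        _ = ∑ k, G⁻¹ i k * (G * A) k j := Matrix.mul_apply
        _ = ∑ k, G⁻¹ i k * (1 : Matrix (Fin (n+1)) (Fin (n+1)) ℝ) k j :=
          Finset.sum_congr rfl fun k _ => by rw [hGA k j hj]
        _ = (G⁻¹ * (1 : Matrix (Fin (n+1)) (Fin (n+1)) ℝ)) i j := (Matrix.mul_apply).symm
        _ = G⁻¹ i j := by rw [Matrix.mul_one]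
    simp [Matrix.sub_apply, hAij]
  intro i j hij
  rcases hij with hi | hj
  · have hGit : G⁻¹ᵀ = G⁻¹ := by rw [Matrix.transpose_nonsing_inv, hGsymm]
    have hAt : A i j = A j i := hA.apply i j |>.symm
    have hGt : G⁻¹ i j = G⁻¹ j i := by
      conv_lhs => rw [← hGit]
      exact Matrix.transpose_apply _ i j
    have := hfinal j i hi
    simp only [Matrix.sub_apply] at this ⊢
    rw [hAt, hGt]
    exact this
  · exact hfinal i j hj
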